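/- Let (x(t), v(t)) be a solution of the Cucker–Smale system for N agents in ℝ^d, and suppose there exists X_M > 0 such that the spatial variance satisfies X(t) ≤ X_M for all t ≥ 0. Then the velocity variance decays exponentially: V(t) ≤ V(0)·exp(−2·a(2√(N·X_M))·t) for all t ≥ 0; in particular V(t) → 0 as t → ∞ and the solution converges to flocking. -/

import Mathlib

open Filter

section CSAux

open Finset

variable {E : Type*} [NormedAddCommGroup E] [InnerProductSpace ℝ E]

lemma cs_sum_w_zero {N : ℕ} (A : Fin N → Fin N → ℝ) (hA : ∀ i j, A i j = A j i)
    (u : Fin N → E) :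
    ∑ i, ((N:ℝ)⁻¹ • ∑ k, A i k • (u k - u i)) = 0 := by
  rw [← Finset.smul_sum, smul_eq_zero]
  right
  have h1 : ∑ i : Fin N, ∑ k : Fin N, A i k • (u k - u i)
      = ∑ i : Fin N, ∑ k : Fin N, A i k • u k - ∑ i : Fin N, ∑ k : Fin N, A i k • u i := by
    simp [smul_sub, Finset.sum_sub_distrib]
  rw [h1, sub_eq_zero]
  rw [Finset.sum_comm]
  apply Finset.sum_congr rfl; intro i _
  apply Finset.sum_congr rfl; intro k _
  rw [hA]

lemma cs_key {N : ℕ} (hN : 0 < N) (A : Fin N → Fin N → ℝ) (hA : ∀ i j, A i j = A j i)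
    (u : Fin N → E) :
    ∑ i, ∑ j, (inner ℝ (u i - u j)
        (((N:ℝ)⁻¹ • ∑ k, A i k • (u k - u i)) - ((N:ℝ)⁻¹ • ∑ k, A j k • (u k - u j))) : ℝ)
      = -∑ i, ∑ j, A i j * ‖u i - u j‖ ^ 2 := by
  set w : Fin N → E := fun i => (N:ℝ)⁻¹ • ∑ k, A i k • (u k - u i) with hw
  have hw0 : ∑ i, w i = 0 := cs_sum_w_zero A hA u
  have hNne : ((N:ℝ)) ≠ 0 := by positivity
  -- step 1
  have h1 : ∑ i, ∑ j, (inner ℝ (u i - u j) (w i - w j) : ℝ)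
      = 2 * ∑ i, ∑ j, (inner ℝ (u i - u j) (w i) : ℝ) := by
    have e1 : ∀ i j : Fin N, (inner ℝ (u i - u j) (w i - w j) : ℝ)
        = inner ℝ (u i - u j) (w i) - inner ℝ (u i - u j) (w j) := fun i j => inner_sub_right _ _ _
    simp only [e1, Finset.sum_sub_distrib]
    have e2 : ∑ i, ∑ j, (inner ℝ (u i - u j) (w j) : ℝ)
        = -∑ i, ∑ j, (inner ℝ (u i - u j) (w i) : ℝ) := by
      rw [Finset.sum_comm, ← Finset.sum_neg_distrib]
      apply Finset.sum_congr rfl; intro i _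
      rw [← Finset.sum_neg_distrib]
      apply Finset.sum_congr rfl; intro j _
      rw [← inner_neg_left, neg_sub]
    rw [e2]; ring
  -- step 3
  have h3 : ∑ i, ∑ j, (inner ℝ (u i - u j) (w i) : ℝ)
      = (N:ℝ) * ∑ i, (inner ℝ (u i) (w i) : ℝ) := by
    have e3 : ∀ i : Fin N, ∑ j, (inner ℝ (u i - u j) (w i) : ℝ)
        = (N:ℝ) * inner ℝ (u i) (w i) - inner ℝ (∑ j, u j) (w i) := by
      intro i
      rw [← sum_inner]
      have : ∑ j : Fin N, (u i - u j) = (N:ℝ) • u i - ∑ j, u j := by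
        simp [Finset.sum_sub_distrib, Finset.card_univ, Nat.cast_smul_eq_nsmul]
      rw [this, inner_sub_left, real_inner_smul_left]
    simp only [e3, Finset.sum_sub_distrib, ← inner_sum, hw0, inner_zero_right, sub_zero,
      Finset.mul_sum]
  -- step 4
  have h4 : (N:ℝ) * ∑ i, (inner ℝ (u i) (w i) : ℝ)
      = ∑ i, ∑ k, A i k * (inner ℝ (u i) (u k - u i) : ℝ) := by
    rw [Finset.mul_sum]
    apply Finset.sum_congr rfl; intro i _
    rw [hw, real_inner_smul_right, inner_sum]
    simp only [real_inner_smul_right]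
    field_simp
  -- step 5
  have h5 : 2 * ∑ i, ∑ k, A i k * (inner ℝ (u i) (u k - u i) : ℝ)
      = -∑ i, ∑ k, A i k * ‖u i - u k‖ ^ 2 := by
    have swap : ∑ i, ∑ k, A i k * (inner ℝ (u i) (u k - u i) : ℝ)
        = ∑ i, ∑ k, A i k * (inner ℝ (u k) (u i - u k) : ℝ) := by
      rw [Finset.sum_comm]
      apply Finset.sum_congr rfl; intro i _
      apply Finset.sum_congr rfl; intro k _
      rw [hA]
    rw [two_mul]
    nth_rewrite 2 [swap]
    rw [← Finset.sum_add_distrib, ← Finset.sum_neg_distrib]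
    apply Finset.sum_congr rfl; intro i _
    rw [← Finset.sum_add_distrib, ← Finset.sum_neg_distrib]
    apply Finset.sum_congr rfl; intro k _
    rw [← mul_add, ← mul_neg]
    congr 1
    have : (inner ℝ (u i) (u k - u i) : ℝ) + inner ℝ (u k) (u i - u k)
        = inner ℝ (u i - u k) (u k - u i) := by
      rw [inner_sub_left]
      simp [inner_sub_right, real_inner_comm]
      ring
    rw [this, ← neg_sub (u i) (u k), inner_neg_right, ← real_inner_self_eq_norm_sq]
  calc ∑ i, ∑ j, (inner ℝ (u i - u j) (w i - w j) : ℝ)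
      = 2 * ((N:ℝ) * ∑ i, (inner ℝ (u i) (w i) : ℝ)) := by rw [h1, h3]
    _ = -∑ i, ∑ j, A i j * ‖u i - u j‖ ^ 2 := by rw [h4, h5]

lemma cs_dist_sq_le {N : ℕ} (hN : 0 < N) (u : Fin N → E) (i j : Fin N) :
    ‖u i - u j‖ ^ 2 ≤ (N:ℝ)⁻¹ * ∑ k, ∑ l, ‖u k - u l‖ ^ 2 := by
  have hNne : ((N:ℝ)) ≠ 0 := by positivity
  rcases eq_or_ne i j with rfl | hij
  · have h0 : ‖u i - u i‖ ^ 2 = 0 := by simp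
    rw [h0]
    positivity
  set m : E := (N:ℝ)⁻¹ • ∑ k, u k with hm
  set y : Fin N → E := fun k => u k - m with hy
  have hy0 : ∑ k, y k = 0 := by
    simp only [hy, Finset.sum_sub_distrib, Finset.sum_const, Finset.card_univ, Fintype.card_fin,
      hm]
    rw [← Nat.cast_smul_eq_nsmul ℝ, smul_smul, mul_inv_cancel₀ hNne, one_smul, sub_self]
  have hsub : ∀ k l, u k - u l = y k - y l := by
    intro k l; simp [hy, sub_sub_sub_cancel_right]
  have hid : ∑ k, ∑ l, ‖u k - u l‖ ^ 2 = 2 * (N:ℝ) * ∑ k, ‖y k‖ ^ 2 := by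
    simp only [hsub]
    have : ∀ k l : Fin N, ‖y k - y l‖ ^ 2 = ‖y k‖ ^ 2 - 2 * inner ℝ (y k) (y l) + ‖y l‖ ^ 2 :=
      fun k l => norm_sub_sq_real _ _
    simp only [this, Finset.sum_add_distrib, Finset.sum_sub_distrib, Finset.sum_const,
      Finset.card_univ, Fintype.card_fin, ← Finset.mul_sum, ← inner_sum, ← sum_inner, hy0,
      inner_zero_left, mul_zero, nsmul_eq_mul]
    ring
  have hterm : ‖y i‖ ^ 2 + ‖y j‖ ^ 2 ≤ ∑ k, ‖y k‖ ^ 2 :=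
    calc ‖y i‖ ^ 2 + ‖y j‖ ^ 2 = ∑ k ∈ ({i, j} : Finset (Fin N)), ‖y k‖ ^ 2 := by
          rw [Finset.sum_pair hij]
      _ ≤ ∑ k, ‖y k‖ ^ 2 := Finset.sum_le_sum_of_subset_of_nonneg (Finset.subset_univ _)
          (fun k _ _ => by positivity)
  have hLY : ‖u i - u j‖ ^ 2 ≤ 2 * (‖y i‖ ^ 2 + ‖y j‖ ^ 2) := by
    rw [hsub]
    have h1 : ‖y i - y j‖ ≤ ‖y i‖ + ‖y j‖ := norm_sub_le _ _
    nlinarith [mul_self_le_mul_self (norm_nonneg (y i - y j)) h1, sq_nonneg (‖y i‖ - ‖y j‖)]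
  calc ‖u i - u j‖ ^ 2 ≤ 2 * (‖y i‖ ^ 2 + ‖y j‖ ^ 2) := hLY
    _ ≤ 2 * ∑ k, ‖y k‖ ^ 2 := by linarith
    _ = (N:ℝ)⁻¹ * (2 * (N:ℝ) * ∑ k, ‖y k‖ ^ 2) := by field_simp
    _ = (N:ℝ)⁻¹ * ∑ k, ∑ l, ‖u k - u l‖ ^ 2 := by rw [hid]

end CSAux

/-- If along a solution of the Cucker–Smale system the spatial
variance remains bounded, `X(t) ≤ X_M` for all `t ≥ 0`, then the velocity variance
decays exponentially: `V(t) ≤ V(0)·exp(−2·a(2√(N·X_M))·t)` for all `t ≥ 0`; in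
particular `V(t) → 0`, so the solution converges to flocking. -/
theorem cucker_smale_exponential_decay
    {d N : ℕ} (hN : 0 < N)
    (a : ℝ → ℝ)
    (ha_pos : ∀ s, 0 ≤ s → 0 < a s)
    (ha_anti : AntitoneOn a (Set.Ici 0))
    (ha_smooth : ContDiffOn ℝ 1 a (Set.Ici 0))
    (x v : ℝ → Fin N → EuclideanSpace ℝ (Fin d))
    (hx : ∀ i t, HasDerivAt (fun s => x s i) (v t i) t)
    (hv : ∀ i t, HasDerivAt (fun s => v s i)
      ((N : ℝ)⁻¹ • ∑ j, a ‖x t j - x t i‖ • (v t j - v t i)) t)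
    (X V : ℝ → ℝ)
    (hX : ∀ t, X t = (1 / (2 * (N : ℝ) ^ 2)) * ∑ i, ∑ j, ‖x t i - x t j‖ ^ 2)
    (hV : ∀ t, V t = (1 / (2 * (N : ℝ) ^ 2)) * ∑ i, ∑ j, ‖v t i - v t j‖ ^ 2)
    (X_M : ℝ) (hXM : 0 < X_M) (hbound : ∀ t ≥ (0 : ℝ), X t ≤ X_M) :
    (∀ t ≥ (0 : ℝ), V t ≤ V 0 * Real.exp (-2 * a (2 * Real.sqrt (N * X_M)) * t)) ∧
    Tendsto V atTop (nhds 0) := by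
  have hNpos : (0:ℝ) < (N:ℝ) := by exact_mod_cast hN
  have hNne : ((N:ℝ)) ≠ 0 := ne_of_gt hNpos
  set α : ℝ := a (2 * Real.sqrt (N * X_M)) with hα
  have hαpos : 0 < α := ha_pos _ (by positivity)
  set c : ℝ := 1 / (2 * (N:ℝ) ^ 2) with hc
  have hcpos : 0 < c := by positivity
  set w : ℝ → Fin N → EuclideanSpace ℝ (Fin d) :=
    fun t i => (N : ℝ)⁻¹ • ∑ j, a ‖x t j - x t i‖ • (v t j - v t i) with hw
  -- derivative of V
  set D : ℝ → ℝ := fun t => c * ∑ i, ∑ j,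
      (2 * inner ℝ (v t i - v t j) (w t i - w t j) : ℝ) with hD
  have hVfun : V = fun s => c * ∑ i, ∑ j,
      (inner ℝ (v s i - v s j) (v s i - v s j) : ℝ) := by
    funext s
    rw [hV s]
    congr 1
    apply Finset.sum_congr rfl; intro i _
    apply Finset.sum_congr rfl; intro j _
    rw [real_inner_self_eq_norm_sq]
  have hVd : ∀ t, HasDerivAt V (D t) t := by
    intro t
    rw [hVfun, hD]
    apply HasDerivAt.const_mul
    apply HasDerivAt.fun_sum; intro i _
    apply HasDerivAt.fun_sum; intro j _
    have hf : HasDerivAt (fun s => v s i - v s j) (w t i - w t j) t :=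
      (hv i t).sub (hv j t)
    have h2 := HasDerivAt.inner ℝ hf hf
    refine h2.congr_deriv ?_
    rw [real_inner_comm (w t i - w t j) (v t i - v t j)]
    ring
  -- V is nonnegative
  have hVnonneg : ∀ t, 0 ≤ V t := by
    intro t
    rw [hV t]
    positivity
  -- the interaction strengths are bounded below by α for t ≥ 0
  have hAge : ∀ t ≥ (0:ℝ), ∀ i j, α ≤ a ‖x t j - x t i‖ := by
    intro t ht i j
    have h1 : ‖x t j - x t i‖ ^ 2 ≤ (N:ℝ)⁻¹ * ∑ k, ∑ l, ‖x t k - x t l‖ ^ 2 :=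
      cs_dist_sq_le hN (x t) j i
    have h2 : ∑ k, ∑ l, ‖x t k - x t l‖ ^ 2 = 2 * (N:ℝ)^2 * X t := by
      rw [hX t, hc]; field_simp
    have h3 : ‖x t j - x t i‖ ^ 2 ≤ 2 * (N:ℝ) * X_M := by
      have hXt := hbound t ht
      calc ‖x t j - x t i‖ ^ 2 ≤ (N:ℝ)⁻¹ * ∑ k, ∑ l, ‖x t k - x t l‖ ^ 2 := h1
        _ = (N:ℝ)⁻¹ * (2 * (N:ℝ)^2 * X t) := by rw [h2]
        _ = 2 * (N:ℝ) * X t := by field_simp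
        _ ≤ 2 * (N:ℝ) * X_M := by nlinarith
    have h4 : ‖x t j - x t i‖ ^ 2 ≤ (2 * Real.sqrt ((N:ℝ) * X_M)) ^ 2 := by
      have : (2 * Real.sqrt ((N:ℝ) * X_M)) ^ 2 = 4 * ((N:ℝ) * X_M) := by
        rw [mul_pow, Real.sq_sqrt (by positivity)]
        ring
      rw [this]
      nlinarith
    have hle : ‖x t j - x t i‖ ≤ 2 * Real.sqrt ((N:ℝ) * X_M) :=
      calc ‖x t j - x t i‖ = Real.sqrt (‖x t j - x t i‖ ^ 2) := by
            rw [Real.sqrt_sq (norm_nonneg _)]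
        _ ≤ Real.sqrt ((2 * Real.sqrt ((N:ℝ) * X_M)) ^ 2) := Real.sqrt_le_sqrt h4
        _ = 2 * Real.sqrt ((N:ℝ) * X_M) := Real.sqrt_sq (by positivity)
    exact ha_anti (Set.mem_Ici.mpr (norm_nonneg _)) (Set.mem_Ici.mpr (by positivity)) hle
  -- the differential inequality
  have hDle : ∀ t ≥ (0:ℝ), D t ≤ -(2 * α) * V t := by
    intro t ht
    have hkey := cs_key hN (fun i k => a ‖x t k - x t i‖)
      (fun i k => by show a ‖x t k - x t i‖ = a ‖x t i - x t k‖; rw [norm_sub_rev]) (v t)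
    have hDeq : D t = c * (2 * -∑ i, ∑ j, a ‖x t j - x t i‖ * ‖v t i - v t j‖ ^ 2) := by
      rw [hD, ← hkey]
      simp only [Finset.mul_sum]
      rfl
    rw [hDeq, hVfun]
    have hsumle : ∑ i, ∑ j, α * ‖v t i - v t j‖ ^ 2
        ≤ ∑ i, ∑ j, a ‖x t j - x t i‖ * ‖v t i - v t j‖ ^ 2 := by
      apply Finset.sum_le_sum; intro i _
      apply Finset.sum_le_sum; intro j _
      exact mul_le_mul_of_nonneg_right (hAge t ht i j) (by positivity)
    have hinner : ∀ s, ∑ i, ∑ j, (inner ℝ (v s i - v s j) (v s i - v s j) : ℝ)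
        = ∑ i, ∑ j, ‖v s i - v s j‖ ^ 2 := by
      intro s
      apply Finset.sum_congr rfl; intro i _
      apply Finset.sum_congr rfl; intro j _
      rw [real_inner_self_eq_norm_sq]
    simp only [hinner]
    have : α * ∑ i, ∑ j, ‖v t i - v t j‖ ^ 2 ≤ ∑ i, ∑ j,
        a ‖x t j - x t i‖ * ‖v t i - v t j‖ ^ 2 := by
      rw [Finset.mul_sum]
      simpa only [Finset.mul_sum] using hsumle
    nlinarith [hcpos.le]
  -- Gronwall via monotonicity of g t = V t * exp (2 α t)
  set g : ℝ → ℝ := fun t => V t * Real.exp (2 * α * t) with hg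
  have hgd : ∀ t, HasDerivAt g
      (D t * Real.exp (2 * α * t) + V t * (2 * α * Real.exp (2 * α * t))) t := by
    intro t
    have hexp : HasDerivAt (fun s => Real.exp (2 * α * s)) (2 * α * Real.exp (2 * α * t)) t := by
      have h1 : HasDerivAt (fun s : ℝ => 2 * α * s) (2 * α) t := by
        simpa using (hasDerivAt_id t).const_mul (2 * α)
      simpa [mul_comm] using h1.exp
    exact (hVd t).mul hexp
  have hgdiff : Differentiable ℝ g := fun t => (hgd t).differentiableAt
  have hganti : AntitoneOn g (Set.Ici (0:ℝ)) := by
    apply antitoneOn_of_deriv_nonpos (convex_Ici 0) hgdiff.continuous.continuousOn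
      (hgdiff.differentiableOn.mono interior_subset)
    intro t ht
    rw [interior_Ici] at ht
    rw [(hgd t).deriv]
    have h1 := hDle t (le_of_lt ht)
    have h2 : (0:ℝ) < Real.exp (2 * α * t) := Real.exp_pos _
    nlinarith
  have hmain : ∀ t ≥ (0:ℝ), V t ≤ V 0 * Real.exp (-2 * α * t) := by
    intro t ht
    have h1 : g t ≤ g 0 := hganti (Set.mem_Ici.mpr le_rfl) (Set.mem_Ici.mpr ht) ht
    have h2 : g 0 = V 0 := by simp [hg]
    have h3 : V t * Real.exp (2 * α * t) ≤ V 0 := by rw [← h2]; exact h1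
    have h4 : Real.exp (-2 * α * t) = (Real.exp (2 * α * t))⁻¹ := by
      rw [← Real.exp_neg]; ring_nf
    have h5 : (0:ℝ) < Real.exp (2 * α * t) := Real.exp_pos _
    have h6 := mul_le_mul_of_nonneg_right h3 (inv_nonneg.mpr h5.le)
    rw [mul_assoc, mul_inv_cancel₀ h5.ne', mul_one] at h6
    rw [h4]
    exact h6
  refine ⟨hmain, ?_⟩
  -- squeeze
  have hbnd : Tendsto (fun t => V 0 * Real.exp (-2 * α * t)) atTop (nhds 0) := by
    have h1 : Tendsto (fun t : ℝ => 2 * α * t) atTop atTop :=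
      Tendsto.const_mul_atTop (by positivity) tendsto_id
    have h2 : Tendsto (fun t : ℝ => Real.exp (-(2 * α * t))) atTop (nhds 0) :=
      (Real.tendsto_exp_neg_atTop_nhds_zero).comp h1
    have h3 : Tendsto (fun t : ℝ => V 0 * Real.exp (-(2 * α * t))) atTop (nhds (V 0 * 0)) :=
      h2.const_mul (V 0)
    rw [mul_zero] at h3
    convert h3 using 2 with t
    ring_nf
  apply squeeze_zero' (Filter.Eventually.of_forall hVnonneg) _ hbnd
  filter_upwards [Filter.eventually_ge_atTop (0:ℝ)] with t ht
  exact hmain t ht
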